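/- arXiv:astro-ph/0203274 — 2 statements merged into one kernel-verified Lean document; each statement's English description precedes it below -/
import Mathlib

section
/- Assume Q satisfies (Q1): there are constants C > 0, F > 0 and 0 < k < 3/2 such that Q(f,P) ≥ C f^{1+1/k} for all f ≥ F and all P ∈ ℝ, and set n := k + 3/2 (so n < 3). Then there is a constant C₂ > 0 depending only on Q and M such that for every nonnegative measurable f on ℝ³×ℝ³ with ∫∫ f dv dx = M one has ∫_{ℝ³} ρ_f(x)^{1+1/n} dx ≤ C₂ (1 + E_kin(f) + 𝒞(f)). -/
set_option maxHeartbeats 1000000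


open MeasureTheory Real Filter Topology ENNReal

noncomputable section

abbrev E3 := EuclideanSpace ℝ (Fin 3)

/-- third component of the angular momentum, P(x,v) = x₁v₂ − x₂v₁ -/
def angmom (z : E3 × E3) : ℝ := z.1 0 * z.2 1 - z.1 1 * z.2 0

/-- induced spatial density ρ_f (as an extended-real valued integral) -/
def rhoL (f : E3 × E3 → ℝ) (x : E3) : ℝ≥0∞ := ∫⁻ v : E3, ENNReal.ofReal (f (x, v))

/-- kinetic energy E_kin(f) = ½∫∫ |v|² f -/
def EkinL (f : E3 × E3 → ℝ) : ℝ≥0∞ :=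
  (1/2 : ℝ≥0∞) * ∫⁻ z : E3 × E3, ENNReal.ofReal (‖z.2‖^2 * f z)

/-- Casimir functional 𝒞(f) = ∫∫ Q(f,P) -/
def CasimirL (Q : ℝ → ℝ → ℝ) (f : E3 × E3 → ℝ) : ℝ≥0∞ :=
  ∫⁻ z : E3 × E3, ENNReal.ofReal (Q (f z) (angmom z))

lemma aux_two_rpow (a b : ℝ≥0∞) {θ : ℝ} (hθ : 0 ≤ θ) :
    (a + b) ^ θ ≤ 2 ^ θ * (a ^ θ + b ^ θ) := by
  have h1 : a + b ≤ 2 * max a b := by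
    rw [two_mul]
    exact add_le_add (le_max_left a b) (le_max_right a b)
  calc (a + b) ^ θ ≤ (2 * max a b) ^ θ := ENNReal.rpow_le_rpow h1 hθ
    _ = 2 ^ θ * (max a b) ^ θ := ENNReal.mul_rpow_of_nonneg _ _ hθ
    _ ≤ 2 ^ θ * (a ^ θ + b ^ θ) := by
        gcongr
        rcases max_cases a b with ⟨h, _⟩ | ⟨h, _⟩ <;> rw [h]
        · exact le_self_add
        · exact le_add_self

lemma aux_rpow_between (t : ℝ≥0∞) {θ : ℝ} (h1 : 1 ≤ θ) (h2 : θ ≤ 5/3) :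
    t ^ θ ≤ t + t ^ ((5:ℝ)/3) := by
  rcases le_total t 1 with ht | ht
  · calc t ^ θ ≤ t ^ (1:ℝ) := ENNReal.rpow_le_rpow_of_exponent_ge ht h1
      _ = t := ENNReal.rpow_one t
      _ ≤ _ := le_self_add
  · calc t ^ θ ≤ t ^ ((5:ℝ)/3) := ENNReal.rpow_le_rpow_of_exponent_le ht h2
      _ ≤ _ := le_add_self


lemma lemC {κv m a : ℝ≥0∞} {Fv : ℝ} (hF : 0 < Fv) (hκ0 : κv ≠ 0) (hκt : κv ≠ ∞)
    (H : ∀ R : ℝ, 0 < R →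
      m ≤ ENNReal.ofReal Fv * (ENNReal.ofReal (R ^ 3) * κv) + ENNReal.ofReal (R⁻¹ ^ 2) * a) :
    m ^ ((5:ℝ)/3) ≤ ENNReal.ofReal ((4/3) * (4 * Fv * κv.toReal) ^ ((2:ℝ)/3)) * a := by
  have hκtpos : 0 < κv.toReal := ENNReal.toReal_pos hκ0 hκt
  set κt := κv.toReal with hκdef
  have hβ : 0 < 4 * Fv * κt := by positivity
  have hc : 0 < (4/3 : ℝ) * (4 * Fv * κt) ^ ((2:ℝ)/3) := by positivity
  by_cases hm0 : m = 0
  · simp [hm0, ENNReal.zero_rpow_of_pos (by norm_num : (0:ℝ) < 5/3)]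
  by_cases hatop : a = ∞
  · rw [hatop, ENNReal.mul_top (by simpa [ENNReal.ofReal_eq_zero] using hc)]
    exact le_top
  have hmt : m ≠ ∞ := by
    intro hm
    have h1 := H 1 one_pos
    rw [hm, top_le_iff] at h1
    exact (ENNReal.add_ne_top.2 ⟨ENNReal.mul_ne_top ENNReal.ofReal_ne_top
      (ENNReal.mul_ne_top ENNReal.ofReal_ne_top hκt),
      ENNReal.mul_ne_top ENNReal.ofReal_ne_top hatop⟩) h1
  set mr := m.toReal with hmrdef
  set ar := a.toReal with hardef
  have hmr : 0 < mr := ENNReal.toReal_pos hm0 hmt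
  have har : 0 ≤ ar := ENNReal.toReal_nonneg
  set R := (mr / (4 * Fv * κt)) ^ ((1:ℝ)/3) with hRdef
  have hR : 0 < R := Real.rpow_pos_of_pos (by positivity) _
  have hR3 : R ^ (3:ℕ) = mr / (4 * Fv * κt) := by
    rw [hRdef, ← Real.rpow_natCast _ 3, ← Real.rpow_mul (by positivity)]
    norm_num
  have hreal : mr ≤ Fv * (R ^ 3 * κt) + R⁻¹ ^ 2 * ar := by
    have h1 := H R hR
    have heq : ENNReal.ofReal Fv * (ENNReal.ofReal (R ^ 3) * κv) + ENNReal.ofReal (R⁻¹ ^ 2) * a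
        = ENNReal.ofReal (Fv * (R ^ 3 * κt) + R⁻¹ ^ 2 * ar) := by
      rw [ENNReal.ofReal_add (by positivity) (by positivity),
        ENNReal.ofReal_mul hF.le, ENNReal.ofReal_mul (by positivity),
        ENNReal.ofReal_mul (by positivity), ENNReal.ofReal_toReal hκt,
        ENNReal.ofReal_toReal hatop]
    rw [heq] at h1
    exact ENNReal.toReal_le_of_le_ofReal (by positivity) h1
  have key : mr * R ^ 2 ≤ (4/3) * ar := by
    have h4 : Fv * (R ^ 3 * κt) = mr / 4 := by
      rw [hR3]; field_simp
    have h5 : (3/4 : ℝ) * mr ≤ R⁻¹ ^ 2 * ar := by linarith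
    have hRR : R⁻¹ ^ 2 * R ^ 2 = 1 := by
      field_simp
    calc mr * R ^ 2 = (4/3) * ((3/4) * mr) * R ^ 2 := by ring
      _ ≤ (4/3) * (R⁻¹ ^ 2 * ar) * R ^ 2 := by
          have := sq_nonneg R
          nlinarith [h5, sq_nonneg R]
      _ = (4/3) * ar * (R⁻¹ ^ 2 * R ^ 2) := by ring
      _ = (4/3) * ar := by rw [hRR, mul_one]
  have hR2 : R ^ (2:ℕ) = (mr / (4 * Fv * κt)) ^ ((2:ℝ)/3) := by
    rw [hRdef, ← Real.rpow_natCast _ 2, ← Real.rpow_mul (by positivity)]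
    norm_num
  have hb23 : (0:ℝ) < (4 * Fv * κt) ^ ((2:ℝ)/3) := Real.rpow_pos_of_pos hβ _
  have hfinal : mr ^ ((5:ℝ)/3) ≤ (4/3) * (4 * Fv * κt) ^ ((2:ℝ)/3) * ar := by
    have e1 : mr ^ ((5:ℝ)/3) = (mr * R ^ 2) * (4 * Fv * κt) ^ ((2:ℝ)/3) := by
      rw [hR2, Real.div_rpow hmr.le hβ.le,
        show (5:ℝ)/3 = 1 + 2/3 by norm_num, Real.rpow_add hmr, Real.rpow_one]
      field_simp
    rw [e1]
    calc (mr * R ^ 2) * (4 * Fv * κt) ^ ((2:ℝ)/3)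
        ≤ ((4/3) * ar) * (4 * Fv * κt) ^ ((2:ℝ)/3) := by gcongr
      _ = (4/3) * (4 * Fv * κt) ^ ((2:ℝ)/3) * ar := by ring
  calc m ^ ((5:ℝ)/3) = ENNReal.ofReal (mr ^ ((5:ℝ)/3)) := by
        conv_lhs => rw [← ENNReal.ofReal_toReal hmt]
        rw [← ENNReal.ofReal_rpow_of_pos hmr]
    _ ≤ ENNReal.ofReal ((4/3) * (4 * Fv * κt) ^ ((2:ℝ)/3) * ar) :=
        ENNReal.ofReal_le_ofReal hfinal
    _ = ENNReal.ofReal ((4/3) * (4 * Fv * κt) ^ ((2:ℝ)/3)) * a := by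
        rw [ENNReal.ofReal_mul hc.le, ENNReal.ofReal_toReal hatop]


lemma lemD {κv m Z a : ℝ≥0∞} {k : ℝ} (hk : 0 < k) (hκ0 : κv ≠ 0) (hκt : κv ≠ ∞)
    (H : ∀ R : ℝ, 0 < R →
      m ≤ Z ^ (1 / (1 + 1/k)) * (ENNReal.ofReal (R ^ 3) * κv) ^ (1 / (k + 1))
          + ENNReal.ofReal (R⁻¹ ^ 2) * a) :
    m ^ (1 + 1/(k + 3/2)) ≤
      ENNReal.ofReal (2 ^ (1 + 1/k) * κv.toReal ^ ((1 + 1/k)/(k + 1)) + 2) * (Z + a) := by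
  have hκtpos : 0 < κv.toReal := ENNReal.toReal_pos hκ0 hκt
  set κt := κv.toReal with hκdef
  set p := 1 + 1/k with hpdef
  set q := k + 1 with hqdef
  set n := k + 3/2 with hndef
  have hp1 : 1 < p := by rw [hpdef]; have := one_div_pos.2 hk; linarith
  have hp0 : 0 < p := by linarith
  have hq0 : 0 < q := by rw [hqdef]; linarith
  have hn0 : 0 < n := by rw [hndef]; linarith
  have hθ0 : 0 < 1 + 1/n := by have := one_div_pos.2 hn0; linarith
  have hc : (0:ℝ) < 2 ^ p * κt ^ (p/q) + 2 := by positivity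
  by_cases hm0 : m = 0
  · rw [hm0, ENNReal.zero_rpow_of_pos hθ0]; exact zero_le
  by_cases hZa : Z + a = ∞
  · rw [hZa, ENNReal.mul_top (by simpa [ENNReal.ofReal_eq_zero] using hc)]
    exact le_top
  have hZt : Z ≠ ∞ := fun h => hZa (by simp [h])
  have hat : a ≠ ∞ := fun h => hZa (by simp [h])
  have hmt : m ≠ ∞ := by
    intro hm
    have h1 := H 1 one_pos
    rw [hm, top_le_iff] at h1
    refine (ENNReal.add_ne_top.2 ⟨ENNReal.mul_ne_top ?_ ?_,
      ENNReal.mul_ne_top ENNReal.ofReal_ne_top hat⟩) h1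
    · exact ENNReal.rpow_ne_top_of_nonneg (by positivity) hZt
    · exact ENNReal.rpow_ne_top_of_nonneg (by positivity)
        (ENNReal.mul_ne_top ENNReal.ofReal_ne_top hκt)
  set mr := m.toReal with hmrdef
  set Zr := Z.toReal with hZrdef
  set ar := a.toReal with hardef
  have hmr : 0 < mr := ENNReal.toReal_pos hm0 hmt
  have hZr : 0 ≤ Zr := ENNReal.toReal_nonneg
  have har : 0 ≤ ar := ENNReal.toReal_nonneg
  set R := mr ^ (1/(2*n)) with hRdef
  have hR : 0 < R := Real.rpow_pos_of_pos hmr _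
  -- convert hypothesis to reals
  have hreal : mr ≤ Zr ^ (1/p) * (R ^ 3 * κt) ^ (1/q) + R⁻¹ ^ 2 * ar := by
    have h1 := H R hR
    have heq : Z ^ (1/p) * (ENNReal.ofReal (R ^ 3) * κv) ^ (1/q) + ENNReal.ofReal (R⁻¹ ^ 2) * a
        = ENNReal.ofReal (Zr ^ (1/p) * (R ^ 3 * κt) ^ (1/q) + R⁻¹ ^ 2 * ar) := by
      conv_lhs => rw [← ENNReal.ofReal_toReal hZt, ← ENNReal.ofReal_toReal hκt,
        ← ENNReal.ofReal_toReal hat]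
      rw [← ENNReal.ofReal_mul (by positivity),
        ENNReal.ofReal_rpow_of_nonneg hZr (by positivity),
        ENNReal.ofReal_rpow_of_nonneg (by positivity) (by positivity),
        ← ENNReal.ofReal_mul (by positivity),
        ← ENNReal.ofReal_mul (by positivity),
        ← ENNReal.ofReal_add (by positivity) (by positivity)]
    rw [heq] at h1
    exact ENNReal.toReal_le_of_le_ofReal (by positivity) h1
  have hR2 : R ^ (2:ℕ) = mr ^ (1/n) := by
    rw [hRdef, ← Real.rpow_natCast _ 2, ← Real.rpow_mul hmr.le]
    congr 1
    field_simp
    norm_num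
  have hfinal : mr ^ (1 + 1/n) ≤ (2 ^ p * κt ^ (p/q) + 2) * (Zr + ar) := by
    rcases le_total (mr/2) (R⁻¹ ^ 2 * ar) with hcase | hcase
    · -- tail dominates
      have hRR : R⁻¹ ^ 2 * R ^ 2 = 1 := by field_simp
      have h2 : mr * R ^ 2 ≤ 2 * ar := by
        calc mr * R ^ 2 = 2 * (mr/2) * R ^ 2 := by ring
          _ ≤ 2 * (R⁻¹ ^ 2 * ar) * R ^ 2 := by nlinarith [sq_nonneg R]
          _ = 2 * ar * (R⁻¹ ^ 2 * R ^ 2) := by ring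
          _ = 2 * ar := by rw [hRR, mul_one]
      have h3 : mr ^ (1 + 1/n) = mr * R ^ 2 := by
        rw [hR2, Real.rpow_add hmr, Real.rpow_one]
      rw [h3]
      nlinarith [Real.rpow_pos_of_pos (by norm_num : (0:ℝ) < 2) p,
        Real.rpow_nonneg hκtpos.le (p/q), h2,
        mul_nonneg (Real.rpow_nonneg (by norm_num : (0:ℝ) ≤ 2) p)
          (Real.rpow_nonneg hκtpos.le (p/q))]
    · -- Hölder term dominates
      have hcase' : mr/2 ≤ Zr ^ (1/p) * (R ^ 3 * κt) ^ (1/q) := by linarith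
      have hR3 : R ^ (3:ℕ) = mr ^ (3/(2*n)) := by
        rw [hRdef, ← Real.rpow_natCast _ 3, ← Real.rpow_mul hmr.le]
        congr 1
        field_simp
        norm_num
      set e := 3 * p / (2 * n * q) with hedef
      have hexp : p = (1 + 1/n) + e := by
        rw [hedef, hpdef, hqdef, hndef]
        field_simp
        ring
      have hmono := Real.rpow_le_rpow (by positivity) hcase' hp0.le
      have hlhs : (mr/2) ^ p = mr ^ p / 2 ^ p := Real.div_rpow hmr.le (by norm_num : (0:ℝ) ≤ 2) p
      have hBB : ((R ^ 3 * κt) ^ (1/q)) ^ p = mr ^ e * κt ^ (p/q) := by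
        rw [← Real.rpow_mul (by positivity : (0:ℝ) ≤ R ^ 3 * κt),
          Real.mul_rpow (by positivity) hκtpos.le, hR3,
          ← Real.rpow_mul hmr.le]
        have e1 : 3/(2*n) * (1/q*p) = e := by rw [hedef]; field_simp
        have e2 : 1/q*p = p/q := by ring
        rw [e1, e2]
      have hrhs : (Zr ^ (1/p) * (R ^ 3 * κt) ^ (1/q)) ^ p
          = Zr * (mr ^ e * κt ^ (p/q)) := by
        rw [Real.mul_rpow (by positivity) (by positivity), hBB,
          ← Real.rpow_mul hZr, one_div_mul_cancel hp0.ne', Real.rpow_one]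
      rw [hlhs, hrhs] at hmono
      have hme : 0 < mr ^ e := Real.rpow_pos_of_pos hmr _
      have h2p : (0:ℝ) < 2 ^ p := Real.rpow_pos_of_pos (by norm_num) _
      have hsplit : mr ^ p = mr ^ (1 + 1/n) * mr ^ e := by
        rw [hexp, Real.rpow_add hmr]
      rw [hsplit] at hmono
      have hkey : mr ^ (1 + 1/n) ≤ 2 ^ p * κt ^ (p/q) * Zr := by
        have h6 : mr ^ (1 + 1/n) * mr ^ e ≤ (2 ^ p * κt ^ (p/q) * Zr) * mr ^ e := by
          have h7 := mul_le_mul_of_nonneg_left hmono (le_of_lt h2p)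
          have eL : 2 ^ p * (mr ^ (1 + 1/n) * mr ^ e / 2 ^ p) = mr ^ (1 + 1/n) * mr ^ e := by
            field_simp
          have eR : 2 ^ p * (Zr * (mr ^ e * κt ^ (p/q))) = (2 ^ p * κt ^ (p/q) * Zr) * mr ^ e := by
            ring
          rw [eL, eR] at h7
          exact h7
        exact le_of_mul_le_mul_right h6 hme
      nlinarith [hkey, mul_nonneg (mul_nonneg h2p.le (Real.rpow_nonneg hκtpos.le (p/q))) hZr,
        mul_nonneg (Real.rpow_nonneg (by norm_num : (0:ℝ) ≤ 2) p)
          (Real.rpow_nonneg hκtpos.le (p/q))]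
  calc m ^ (1 + 1/n) = ENNReal.ofReal (mr ^ (1 + 1/n)) := by
        rw [← ENNReal.ofReal_rpow_of_pos hmr, hmrdef, ENNReal.ofReal_toReal hmt]
    _ ≤ ENNReal.ofReal ((2 ^ p * κt ^ (p/q) + 2) * (Zr + ar)) :=
        ENNReal.ofReal_le_ofReal hfinal
    _ = ENNReal.ofReal (2 ^ p * κt ^ (p/q) + 2) * (Z + a) := by
        rw [ENNReal.ofReal_mul hc.le, ENNReal.ofReal_add hZr har,
          ENNReal.ofReal_toReal hZt, ENNReal.ofReal_toReal hat]


/-- Under assumption (Q1), with n := k + 3/2 < 3, for every nonnegative measurable f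
with total mass M one has ∫ ρ_f^{1+1/n} ≤ C₂ (1 + E_kin(f) + 𝒞(f)). -/
theorem stmt1 (Q : ℝ → ℝ → ℝ) (M C F k n : ℝ)
    (hM : 0 < M) (hC : 0 < C) (hF : 0 < F) (hk : 0 < k) (hk32 : k < 3/2)
    (hQ1 : ∀ s P : ℝ, F ≤ s → C * s ^ (1 + 1/k) ≤ Q s P)
    (hn : n = k + 3/2) :
    ∃ C₂ : ℝ, 0 < C₂ ∧ ∀ f : E3 × E3 → ℝ, Measurable f → (∀ z, 0 ≤ f z) →
      (∫⁻ z : E3 × E3, ENNReal.ofReal (f z)) = ENNReal.ofReal M →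
      (∫⁻ x : E3, (rhoL f x) ^ (1 + 1/n)) ≤
        ENNReal.ofReal C₂ * (1 + EkinL f + CasimirL Q f) := by
  subst hn
  -- the unit ball volume
  set κ : ℝ≥0∞ := volume (Metric.ball (0:E3) 1) with hκdef
  have hκ0 : κ ≠ 0 := (Metric.measure_ball_pos volume 0 one_pos).ne'
  have hκt : κ ≠ ∞ := (measure_ball_lt_top).ne
  have hκtpos : 0 < κ.toReal := ENNReal.toReal_pos hκ0 hκt
  -- constants
  set c₁ : ℝ := (4/3) * (4 * F * κ.toReal) ^ ((2:ℝ)/3) with hc₁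
  set c₂ : ℝ := 2 ^ (1 + 1/k) * κ.toReal ^ ((1 + 1/k)/(k + 1)) + 2 with hc₂
  have hc₁pos : 0 < c₁ := by rw [hc₁]; positivity
  have hc₂pos : 0 < c₂ := by rw [hc₂]; positivity
  set D : ℝ := M + 2*c₁ + c₂*C⁻¹ + 2*c₂ with hD
  have hDpos : 0 < D := by rw [hD]; positivity
  clear_value c₁ c₂ D
  refine ⟨4*D, by positivity, ?_⟩
  intro f hf hf0 hmass
  -- split f at level F
  set g1 : E3 × E3 → ℝ := fun z => if F ≤ f z then 0 else f z with hg1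
  set g2 : E3 × E3 → ℝ := fun z => if F ≤ f z then f z else 0 with hg2
  have hg1m : Measurable g1 :=
    Measurable.ite (measurableSet_le measurable_const hf) measurable_const hf
  have hg2m : Measurable g2 :=
    Measurable.ite (measurableSet_le measurable_const hf) hf measurable_const
  have hsplit : ∀ z, f z = g1 z + g2 z := by
    intro z; by_cases h : F ≤ f z <;> simp [hg1, hg2, h]
  have hg10 : ∀ z, 0 ≤ g1 z := by
    intro z; by_cases h : F ≤ f z <;> simp [hg1, h, hf0 z]
  have hg20 : ∀ z, 0 ≤ g2 z := by
    intro z; by_cases h : F ≤ f z <;> simp [hg2, h, hf0 z]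
  have hg1f : ∀ z, g1 z ≤ f z := by
    intro z; by_cases h : F ≤ f z <;> simp [hg1, h, hf0 z]
  have hg2f : ∀ z, g2 z ≤ f z := by
    intro z; by_cases h : F ≤ f z <;> simp [hg2, h, hf0 z]
  have hg1F : ∀ z, g1 z ≤ F := by
    intro z; by_cases h : F ≤ f z <;> simp [hg1, h]
    · exact hF.le
    · linarith [lt_of_not_ge h]
  -- the integrand functions
  set φ1 : E3 × E3 → ℝ≥0∞ := fun z => ENNReal.ofReal (g1 z) with hφ1
  set φ2 : E3 × E3 → ℝ≥0∞ := fun z => ENNReal.ofReal (g2 z) with hφ2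
  set φE : E3 × E3 → ℝ≥0∞ := fun z => ENNReal.ofReal (‖z.2‖^2 * f z) with hφE
  set φZ : E3 × E3 → ℝ≥0∞ := fun z => (ENNReal.ofReal (g2 z)) ^ (1 + 1/k) with hφZ
  have hφ1m : Measurable φ1 := hg1m.ennreal_ofReal
  have hφ2m : Measurable φ2 := hg2m.ennreal_ofReal
  have hφEm : Measurable φE := ((measurable_snd.norm.pow measurable_const).mul hf).ennreal_ofReal
  have hφZm : Measurable φZ := hφ2m.pow_const _
  -- slice-wise quantities
  set m1 : E3 → ℝ≥0∞ := fun x => ∫⁻ v, φ1 (x, v) with hm1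
  set m2 : E3 → ℝ≥0∞ := fun x => ∫⁻ v, φ2 (x, v) with hm2
  set aK : E3 → ℝ≥0∞ := fun x => ∫⁻ v, φE (x, v) with haK
  set ZK : E3 → ℝ≥0∞ := fun x => ∫⁻ v, φZ (x, v) with hZK
  have hsec : ∀ (φ : E3 × E3 → ℝ≥0∞), Measurable φ → ∀ x : E3,
      Measurable fun v : E3 => φ (x, v) := fun φ hφ x => hφ.comp measurable_prodMk_left
  -- volume of balls
  have hball : ∀ R : ℝ, 0 < R →
      volume (Metric.ball (0:E3) R) = ENNReal.ofReal (R ^ 3) * κ := by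
    intro R hR
    rw [hκdef, MeasureTheory.Measure.addHaar_ball volume (0:E3) hR.le,
      finrank_euclideanSpace_fin]
  -- tail estimate, for g ≤ f
  have htail : ∀ (g : E3 × E3 → ℝ), (∀ z, g z ≤ f z) → ∀ x : E3, ∀ R : ℝ, 0 < R →
      (∫⁻ v in (Metric.ball (0:E3) R)ᶜ, ENNReal.ofReal (g (x, v)))
        ≤ ENNReal.ofReal (R⁻¹ ^ 2) * aK x := by
    intro g hgf x R hR
    have hstep : ∀ v : E3, v ∈ (Metric.ball (0:E3) R)ᶜ →
        ENNReal.ofReal (g (x, v)) ≤ ENNReal.ofReal (R⁻¹ ^ 2) * φE (x, v) := by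
      intro v hv
      have hvR : R ≤ ‖v‖ := by
        have := hv
        simp only [Set.mem_compl_iff, Metric.mem_ball, dist_zero_right, not_lt] at this
        exact this
      rw [hφE, ← ENNReal.ofReal_mul (by positivity)]
      apply ENNReal.ofReal_le_ofReal
      have h1 : R ^ 2 * f (x, v) ≤ ‖v‖ ^ 2 * f (x, v) :=
        mul_le_mul_of_nonneg_right (by nlinarith) (hf0 _)
      have h2 : g (x, v) ≤ R⁻¹ ^ 2 * (R ^ 2 * f (x, v)) := by
        have : R⁻¹ ^ 2 * (R ^ 2 * f (x, v)) = f (x, v) := by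
          field_simp
        rw [this]; exact hgf _
      calc g (x, v) ≤ R⁻¹ ^ 2 * (R ^ 2 * f (x, v)) := h2
        _ ≤ R⁻¹ ^ 2 * (‖v‖ ^ 2 * f (x, v)) := by
            apply mul_le_mul_of_nonneg_left h1 (by positivity)
    calc (∫⁻ v in (Metric.ball (0:E3) R)ᶜ, ENNReal.ofReal (g (x, v)))
        ≤ ∫⁻ v in (Metric.ball (0:E3) R)ᶜ, ENNReal.ofReal (R⁻¹ ^ 2) * φE (x, v) :=
          setLIntegral_mono' measurableSet_ball.compl hstep
      _ = ENNReal.ofReal (R⁻¹ ^ 2) * ∫⁻ v in (Metric.ball (0:E3) R)ᶜ, φE (x, v) :=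
          lintegral_const_mul' _ _ ENNReal.ofReal_ne_top
      _ ≤ ENNReal.ofReal (R⁻¹ ^ 2) * aK x := by
          rw [haK]
          exact mul_le_mul_right (setLIntegral_le_lintegral _ _) _
  -- estimate (I) for m1
  have hI : ∀ x : E3, ∀ R : ℝ, 0 < R →
      m1 x ≤ ENNReal.ofReal F * (ENNReal.ofReal (R ^ 3) * κ) + ENNReal.ofReal (R⁻¹ ^ 2) * aK x := by
    intro x R hR
    have hsplitint := (lintegral_add_compl (μ := volume) (fun v => φ1 (x, v)) (measurableSet_ball
      (x := (0:E3)) (ε := R))).symm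
    rw [hm1]; beta_reduce
    rw [show (∫⁻ v, φ1 (x, v)) = (∫⁻ v in Metric.ball (0:E3) R, φ1 (x, v))
        + ∫⁻ v in (Metric.ball (0:E3) R)ᶜ, φ1 (x, v) from hsplitint]
    apply add_le_add
    · calc (∫⁻ v in Metric.ball (0:E3) R, φ1 (x, v))
          ≤ ∫⁻ _ in Metric.ball (0:E3) R, ENNReal.ofReal F :=
            setLIntegral_mono' measurableSet_ball
              (fun v _ => ENNReal.ofReal_le_ofReal (hg1F (x, v)))
        _ = ENNReal.ofReal F * volume (Metric.ball (0:E3) R) := setLIntegral_const _ _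
        _ = ENNReal.ofReal F * (ENNReal.ofReal (R ^ 3) * κ) := by rw [hball R hR]
    · exact htail g1 hg1f x R hR
  -- estimate (II) for m2, via Hölder
  have hpq : Real.HolderConjugate (1 + 1/k) (k + 1) := by
    rw [Real.holderConjugate_iff]
    constructor
    · have := one_div_pos.2 hk; linarith
    · field_simp
  have hII : ∀ x : E3, ∀ R : ℝ, 0 < R →
      m2 x ≤ (ZK x) ^ (1 / (1 + 1/k)) * (ENNReal.ofReal (R ^ 3) * κ) ^ (1 / (k + 1))
          + ENNReal.ofReal (R⁻¹ ^ 2) * aK x := by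
    intro x R hR
    have hsplitint := (lintegral_add_compl (μ := volume) (fun v => φ2 (x, v)) (measurableSet_ball
      (x := (0:E3)) (ε := R))).symm
    rw [hm2]; beta_reduce
    rw [show (∫⁻ v, φ2 (x, v)) = (∫⁻ v in Metric.ball (0:E3) R, φ2 (x, v))
        + ∫⁻ v in (Metric.ball (0:E3) R)ᶜ, φ2 (x, v) from hsplitint]
    apply add_le_add
    · -- Hölder
      set s := Metric.ball (0:E3) R with hs
      set ind : E3 → ℝ≥0∞ := s.indicator (fun _ => 1) with hind
      have hindm : Measurable ind := measurable_const.indicator Metric.isOpen_ball.measurableSet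
      have holder := ENNReal.lintegral_mul_le_Lp_mul_Lq (volume : Measure E3) hpq
        ((hsec φ2 hφ2m x).aemeasurable) hindm.aemeasurable
      have hLHS : (∫⁻ v, ((fun v => φ2 (x, v)) * ind) v) = ∫⁻ v in s, φ2 (x, v) := by
        have hptw : ∀ v, ((fun v => φ2 (x, v)) * ind) v = s.indicator (fun v => φ2 (x, v)) v := by
          intro v
          by_cases hv : v ∈ s <;>
            simp [hind, Set.indicator_of_mem, Set.indicator_of_notMem, hv]
        rw [lintegral_congr hptw, lintegral_indicator Metric.isOpen_ball.measurableSet]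
      have hRHS2 : (∫⁻ v, ind v ^ (k + 1)) = volume s := by
        have hptw : ∀ v, ind v ^ (k + 1) = ind v := by
          intro v
          by_cases hv : v ∈ s <;>
            simp [hind, Set.indicator_of_mem, Set.indicator_of_notMem, hv,
              ENNReal.zero_rpow_of_pos (by linarith : (0:ℝ) < k + 1)]
        rw [lintegral_congr hptw, hind, lintegral_indicator Metric.isOpen_ball.measurableSet]
        simp only [lintegral_const, Measure.restrict_apply_univ, one_mul]
        rfl
      rw [hLHS, hRHS2] at holder
      calc (∫⁻ v in s, φ2 (x, v))
          ≤ (∫⁻ v, φ2 (x, v) ^ (1 + 1/k)) ^ (1 / (1 + 1/k)) * (volume s) ^ (1 / (k + 1)) :=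
            holder
        _ = (ZK x) ^ (1 / (1 + 1/k)) * (ENNReal.ofReal (R ^ 3) * κ) ^ (1 / (k + 1)) := by
            rw [hZK, hs, hball R hR]
    · exact htail g2 hg2f x R hR
  -- apply optimization lemmas pointwise
  have hm1bound : ∀ x, (m1 x) ^ ((5:ℝ)/3) ≤ ENNReal.ofReal c₁ * aK x := by
    intro x
    rw [hc₁]
    exact lemC hF hκ0 hκt (hI x)
  have hm2bound : ∀ x, (m2 x) ^ (1 + 1/(k + 3/2)) ≤ ENNReal.ofReal c₂ * (ZK x + aK x) := by
    intro x
    rw [hc₂]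
    exact lemD hk hκ0 hκt (hII x)
  -- exponent facts
  have hkn : (0:ℝ) < k + 3/2 := by linarith
  have h1n : 0 < 1/(k + 3/2) := one_div_pos.2 hkn
  have h1n23 : 1/(k + 3/2) ≤ 2/3 := by
    rw [div_le_div_iff₀ hkn (by norm_num)]
    linarith
  have hθ1 : (1:ℝ) ≤ 1 + 1/(k + 3/2) := by linarith
  have hθ53 : 1 + 1/(k + 3/2) ≤ 5/3 := by linarith
  have hθ2 : 1 + 1/(k + 3/2) ≤ (2:ℝ) := by linarith
  -- rho splits
  have hrho : ∀ x, rhoL f x = m1 x + m2 x := by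
    intro x
    have hptw : ∀ v : E3, ENNReal.ofReal (f (x, v)) = φ1 (x, v) + φ2 (x, v) := by
      intro v
      simp only [hφ1, hφ2]
      rw [hsplit (x, v), ENNReal.ofReal_add (hg10 _) (hg20 _)]
    rw [rhoL, lintegral_congr hptw, lintegral_add_left (hsec φ1 hφ1m x), hm1, hm2]
  have h24 : (2:ℝ≥0∞) ^ (1 + 1/(k + 3/2)) ≤ 4 := by
    calc (2:ℝ≥0∞) ^ (1 + 1/(k + 3/2)) ≤ 2 ^ (2:ℝ) :=
          ENNReal.rpow_le_rpow_of_exponent_le (by norm_num) hθ2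
      _ = 4 := by
          rw [show (2:ℝ) = ((2:ℕ):ℝ) by norm_num, ENNReal.rpow_natCast]
          norm_num
  -- pointwise master bound
  have hpoint : ∀ x, (rhoL f x) ^ (1 + 1/(k + 3/2)) ≤
      4 * (m1 x + ENNReal.ofReal c₁ * aK x + ENNReal.ofReal c₂ * (ZK x + aK x)) := by
    intro x
    rw [hrho x]
    calc (m1 x + m2 x) ^ (1 + 1/(k + 3/2))
        ≤ 2 ^ (1 + 1/(k + 3/2)) * ((m1 x) ^ (1 + 1/(k + 3/2)) + (m2 x) ^ (1 + 1/(k + 3/2))) :=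
          aux_two_rpow _ _ (by linarith)
      _ ≤ 4 * ((m1 x) ^ (1 + 1/(k + 3/2)) + (m2 x) ^ (1 + 1/(k + 3/2))) :=
          mul_le_mul_left h24 _
      _ ≤ 4 * ((m1 x + (m1 x) ^ ((5:ℝ)/3)) + (m2 x) ^ (1 + 1/(k + 3/2))) := by
          gcongr
          exact aux_rpow_between _ hθ1 hθ53
      _ ≤ 4 * ((m1 x + ENNReal.ofReal c₁ * aK x) + ENNReal.ofReal c₂ * (ZK x + aK x)) := by
          gcongr
          · exact hm1bound x
          · exact hm2bound x
      _ = 4 * (m1 x + ENNReal.ofReal c₁ * aK x + ENNReal.ofReal c₂ * (ZK x + aK x)) := by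
          ring
  -- Tonelli
  have hT : ∀ (φ : E3 × E3 → ℝ≥0∞), Measurable φ →
      (∫⁻ x : E3, ∫⁻ v : E3, φ (x, v)) = ∫⁻ z : E3 × E3, φ z := by
    intro φ hφ
    calc (∫⁻ x : E3, ∫⁻ v : E3, φ (x, v))
        = ∫⁻ z : E3 × E3, φ z ∂((volume : Measure E3).prod volume) :=
          (MeasureTheory.lintegral_prod φ hφ.aemeasurable).symm
      _ = ∫⁻ z : E3 × E3, φ z := rfl
  -- measurability of the slice integrals
  have hm1meas : Measurable m1 := by
    rw [hm1]
    exact Measurable.lintegral_prod_right (hφ1m.comp (measurable_fst.prodMk measurable_snd))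
  have haKmeas : Measurable aK := by
    rw [haK]
    exact Measurable.lintegral_prod_right (hφEm.comp (measurable_fst.prodMk measurable_snd))
  have hZKmeas : Measurable ZK := by
    rw [hZK]
    exact Measurable.lintegral_prod_right (hφZm.comp (measurable_fst.prodMk measurable_snd))
  -- the three integrals
  have hS1 : (∫⁻ x, m1 x) ≤ ENNReal.ofReal M := by
    simp only [hm1]
    rw [hT φ1 hφ1m, ← hmass]
    apply lintegral_mono
    intro z
    simp only [hφ1]
    exact ENNReal.ofReal_le_ofReal (hg1f z)
  have h2half : (2:ℝ≥0∞) * (1/2) = 1 := by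
    rw [one_div]
    exact ENNReal.mul_inv_cancel (by norm_num) (by norm_num)
  have hS2 : (∫⁻ x, aK x) = 2 * EkinL f := by
    simp only [haK]
    rw [hT φE hφEm, EkinL, ← mul_assoc, h2half, one_mul]
  have hS3 : (∫⁻ x, ZK x) ≤ ENNReal.ofReal C⁻¹ * CasimirL Q f := by
    simp only [hZK]
    rw [hT φZ hφZm]
    have hpt : ∀ z, φZ z ≤ ENNReal.ofReal C⁻¹ * ENNReal.ofReal (Q (f z) (angmom z)) := by
      intro z
      simp only [hφZ, hg2]
      by_cases hz : F ≤ f z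
      · simp only [if_pos hz]
        have hfz : 0 < f z := lt_of_lt_of_le hF hz
        have hQz := hQ1 (f z) (angmom z) hz
        calc ENNReal.ofReal (f z) ^ (1 + 1/k) = ENNReal.ofReal (f z ^ (1 + 1/k)) :=
              ENNReal.ofReal_rpow_of_pos hfz
          _ = ENNReal.ofReal (C⁻¹ * (C * f z ^ (1 + 1/k))) := by
              rw [← mul_assoc, inv_mul_cancel₀ hC.ne', one_mul]
          _ = ENNReal.ofReal C⁻¹ * ENNReal.ofReal (C * f z ^ (1 + 1/k)) :=
              ENNReal.ofReal_mul (by positivity)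
          _ ≤ ENNReal.ofReal C⁻¹ * ENNReal.ofReal (Q (f z) (angmom z)) :=
              mul_le_mul_right (ENNReal.ofReal_le_ofReal hQz) _
      · simp only [if_neg hz]
        rw [ENNReal.ofReal_zero,
          ENNReal.zero_rpow_of_pos (by have := one_div_pos.2 hk; linarith)]
        exact zero_le
    calc (∫⁻ z, φZ z) ≤ ∫⁻ z, ENNReal.ofReal C⁻¹ * ENNReal.ofReal (Q (f z) (angmom z)) :=
          lintegral_mono hpt
      _ = ENNReal.ofReal C⁻¹ * CasimirL Q f := by
          rw [lintegral_const_mul' _ _ ENNReal.ofReal_ne_top, CasimirL]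
  -- final constant comparison
  have hfinalconst : ∀ EK CS : ℝ≥0∞,
      4 * (ENNReal.ofReal M + ENNReal.ofReal c₁ * (2 * EK)
          + ENNReal.ofReal c₂ * (ENNReal.ofReal C⁻¹ * CS + 2 * EK))
        ≤ ENNReal.ofReal (4 * D) * (1 + EK + CS) := by
    intro EK CS
    have h4 : ENNReal.ofReal (4 * D) = 4 * ENNReal.ofReal D := by
      rw [ENNReal.ofReal_mul (by norm_num : (0:ℝ) ≤ 4)]
      norm_num
    rw [h4, mul_assoc]
    apply mul_le_mul_right
    have hL : ENNReal.ofReal M + ENNReal.ofReal c₁ * (2 * EK)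
          + ENNReal.ofReal c₂ * (ENNReal.ofReal C⁻¹ * CS + 2 * EK)
        = ENNReal.ofReal M + (2 * ENNReal.ofReal c₁ + 2 * ENNReal.ofReal c₂) * EK
          + (ENNReal.ofReal c₂ * ENNReal.ofReal C⁻¹) * CS := by ring
    have hR : ENNReal.ofReal D * (1 + EK + CS)
        = ENNReal.ofReal D + ENNReal.ofReal D * EK + ENNReal.ofReal D * CS := by ring
    rw [hL, hR]
    have hcC : 0 < c₂ * C⁻¹ := mul_pos hc₂pos (inv_pos.2 hC)
    have e1 : ENNReal.ofReal M ≤ ENNReal.ofReal D :=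
      ENNReal.ofReal_le_ofReal (by rw [hD]; linarith)
    have h2c : ∀ t : ℝ, ENNReal.ofReal (2 * t) = 2 * ENNReal.ofReal t := by
      intro t
      rw [ENNReal.ofReal_mul (by norm_num : (0:ℝ) ≤ 2)]
      norm_num
    have e2 : 2 * ENNReal.ofReal c₁ + 2 * ENNReal.ofReal c₂ ≤ ENNReal.ofReal D := by
      have heq : ENNReal.ofReal (2 * c₁ + 2 * c₂)
          = 2 * ENNReal.ofReal c₁ + 2 * ENNReal.ofReal c₂ := by
        rw [ENNReal.ofReal_add (p := 2 * c₁) (q := 2 * c₂) (by positivity) (by positivity),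
          h2c c₁, h2c c₂]
      rw [← heq]
      exact ENNReal.ofReal_le_ofReal (by rw [hD]; linarith)
    have e3 : ENNReal.ofReal c₂ * ENNReal.ofReal C⁻¹ ≤ ENNReal.ofReal D := by
      rw [← ENNReal.ofReal_mul hc₂pos.le]
      exact ENNReal.ofReal_le_ofReal (by rw [hD]; linarith)
    exact add_le_add (add_le_add e1 (mul_le_mul_left e2 _)) (mul_le_mul_left e3 _)
  -- put everything together
  calc (∫⁻ x : E3, (rhoL f x) ^ (1 + 1/(k + 3/2)))
      ≤ ∫⁻ x, 4 * (m1 x + ENNReal.ofReal c₁ * aK x + ENNReal.ofReal c₂ * (ZK x + aK x)) :=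
        lintegral_mono hpoint
    _ = 4 * ∫⁻ x, (m1 x + ENNReal.ofReal c₁ * aK x + ENNReal.ofReal c₂ * (ZK x + aK x)) :=
        lintegral_const_mul' _ _ (by norm_num)
    _ = 4 * ((∫⁻ x, m1 x) + ENNReal.ofReal c₁ * (∫⁻ x, aK x)
          + ENNReal.ofReal c₂ * ((∫⁻ x, ZK x) + (∫⁻ x, aK x))) := by
        rw [lintegral_add_left (f := fun x => m1 x + ENNReal.ofReal c₁ * aK x) (hm1meas.add (haKmeas.const_mul _)),
          lintegral_add_left hm1meas,
          lintegral_const_mul' _ _ ENNReal.ofReal_ne_top,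
          lintegral_const_mul' _ _ ENNReal.ofReal_ne_top,
          lintegral_add_left hZKmeas]
    _ ≤ 4 * (ENNReal.ofReal M + ENNReal.ofReal c₁ * (2 * EkinL f)
          + ENNReal.ofReal c₂ * (ENNReal.ofReal C⁻¹ * CasimirL Q f + 2 * EkinL f)) := by
        apply mul_le_mul_right
        refine add_le_add (add_le_add hS1 ?_) (mul_le_mul_right (add_le_add hS3 hS2.le) _)
        rw [hS2]
    _ ≤ ENNReal.ofReal (4 * D) * (1 + EkinL f + CasimirL Q f) :=
        hfinalconst _ _
end
end

section
/- Let Q : [0,∞)×ℝ → [0,∞) be continuous with Q(·,P) convex and continuously differentiable for each P, Q(0,·) = 0 = ∂_f Q(0,·), and ∂_f Q(·,P) : [0,∞) → [0,∞) a bijection for each P. Let U₀ : ℝ³ → ℝ be measurable, E(x,v) := ½|v|² + U₀(x), E₀ ∈ ℝ, and suppose f₀(x,v) = φ(E₀ − E(x,v), P(x,v)) where φ(s,P) := (∂_f Q(·,P))^{-1}(s) for s ≥ 0 and φ(s,P) := 0 for s < 0. Then for every nonnegative f ∈ L¹(ℝ⁶) with ∫∫ f dv dx = ∫∫ f₀ dv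 dx for which the integral below converges absolutely, d(f,f₀) := ∫∫ [ Q(f,P) − Q(f₀,P) + (E − E₀)(f − f₀) ] dv dx ≥ 0. -/
open MeasureTheory Real Filter Topology

noncomputable section

def e3 (a b c : ℝ) : E3 := (WithLp.equiv 2 (Fin 3 → ℝ)).symm ![a, b, c]

/-- induced spatial density ρ_f -/
def rho (f : E3 × E3 → ℝ) (x : E3) : ℝ := ∫ v : E3, f (x, v)

/-- kinetic energy -/
def Ekin (f : E3 × E3 → ℝ) : ℝ := (1/2) * ∫ z : E3 × E3, ‖z.2‖^2 * f z

/-- potential energy -/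
def Epot (f : E3 × E3 → ℝ) : ℝ :=
  -(1/2) * ∫ x : E3, ∫ y : E3, rho f x * rho f y / ‖x - y‖

/-- Casimir functional 𝒞 -/
def Casimir (Q : ℝ → ℝ → ℝ) (f : E3 × E3 → ℝ) : ℝ :=
  ∫ z : E3 × E3, Q (f z) (angmom z)

/-- energy-Casimir functional ℋ_C -/
def HC (Q : ℝ → ℝ → ℝ) (f : E3 × E3 → ℝ) : ℝ := Ekin f + Epot f + Casimir Q f

/-- rotation about the x₃-axis by angle θ -/
def rotZ (θ : ℝ) (x : E3) : E3 :=
  e3 (Real.cos θ * x 0 - Real.sin θ * x 1) (Real.sin θ * x 0 + Real.cos θ * x 1) (x 2)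

/-- axial symmetry: invariance under all rotations about the x₃-axis -/
def AxiSym (f : E3 × E3 → ℝ) : Prop :=
  ∀ (θ : ℝ) (z : E3 × E3), f (rotZ θ z.1, rotZ θ z.2) = f z

/-- membership in the constraint set ℱ_M -/
def MemFM (Q : ℝ → ℝ → ℝ) (M : ℝ) (f : E3 × E3 → ℝ) : Prop :=
  Integrable f ∧ (∀ z, 0 ≤ f z) ∧ (∫ z : E3 × E3, f z) = M ∧
    Integrable (fun z : E3 × E3 => ‖z.2‖^2 * f z) ∧
    Integrable (fun z : E3 × E3 => Q (f z) (angmom z))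

/-- membership in the axially symmetric constraint set ℱ_M^S -/
def MemFMS (Q : ℝ → ℝ → ℝ) (M : ℝ) (f : E3 × E3 → ℝ) : Prop :=
  MemFM Q M f ∧ AxiSym f

/-- h_M = inf of ℋ_C over ℱ_M -/
def hInf (Q : ℝ → ℝ → ℝ) (M : ℝ) : ℝ := sInf (HC Q '' {f | MemFM Q M f})

/-- h_M^S = inf of ℋ_C over ℱ_M^S -/
def hInfS (Q : ℝ → ℝ → ℝ) (M : ℝ) : ℝ := sInf (HC Q '' {f | MemFMS Q M f})

/-- induced gravitational potential U₀ of a state f₀ -/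
def U0 (f0 : E3 × E3 → ℝ) (x : E3) : ℝ := -∫ y : E3, rho f0 y / ‖x - y‖

/-- particle energy E(x,v) = ½|v|² + U₀(x) -/
def Eng (f0 : E3 × E3 → ℝ) (z : E3 × E3) : ℝ := (1/2) * ‖z.2‖^2 + U0 f0 z.1

/-- φ(s,P) = (∂_f Q(·,P))⁻¹(s) for s ≥ 0, and 0 for s < 0 -/
def phi (Qf : ℝ → ℝ → ℝ) (s P : ℝ) : ℝ :=
  if 0 ≤ s then Function.invFunOn (fun t => Qf t P) (Set.Ici 0) s else 0

lemma tangent_le {g : ℝ → ℝ} {g' a b : ℝ} (hc : ConvexOn ℝ (Set.Ici 0) g)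
    (hd : HasDerivWithinAt g g' (Set.Ici 0) b) (ha : 0 ≤ a) (hb : 0 ≤ b) :
    g b + g' * (a - b) ≤ g a := by
  rcases lt_trichotomy a b with h | h | h
  · have := hc.slope_le_of_hasDerivWithinAt ha hb h hd
    rw [slope_def_field, div_le_iff₀ (by linarith)] at this
    nlinarith
  · simp [h]
  · have := hc.le_slope_of_hasDerivWithinAt hb ha h hd
    rw [slope_def_field, le_div_iff₀ (by linarith)] at this
    nlinarith

/-- Nonnegativity of d(f,f₀): if f₀ = φ(E₀ − E, P) with φ(·,P) inverting the derivative
∂_f Q(·,P) of a convex Q, then d(f,f₀) = ∫∫ [Q(f,P) − Q(f₀,P) + (E − E₀)(f − f₀)] ≥ 0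
for every nonnegative f ∈ L¹ with the same total mass as f₀. -/
theorem stmt17 (Q Qf' : ℝ → ℝ → ℝ)
    (hQcont : ContinuousOn (fun p : ℝ × ℝ => Q p.1 p.2) (Set.Ici (0:ℝ) ×ˢ (Set.univ : Set ℝ)))
    (hconv : ∀ P : ℝ, ConvexOn ℝ (Set.Ici 0) (fun s => Q s P))
    (hQderiv : ∀ s P : ℝ, 0 ≤ s → HasDerivWithinAt (fun t => Q t P) (Qf' s P) (Set.Ici 0) s)
    (hQnonneg : ∀ s P : ℝ, 0 ≤ s → 0 ≤ Q s P)
    (hQzero : ∀ P : ℝ, Q 0 P = 0) (hQfzero : ∀ P : ℝ, Qf' 0 P = 0)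
    (hbij : ∀ P : ℝ, Set.BijOn (fun s => Qf' s P) (Set.Ici 0) (Set.Ici 0))
    (W : E3 → ℝ) (hW : Measurable W) (E0 : ℝ) (f f0 : E3 × E3 → ℝ)
    (hf0def : ∀ z : E3 × E3,
      f0 z = phi Qf' (E0 - ((1/2) * ‖z.2‖^2 + W z.1)) (angmom z))
    (hf : Integrable f) (hf0 : Integrable f0) (hnn : ∀ z, 0 ≤ f z)
    (hmass : (∫ z : E3 × E3, f z) = ∫ z : E3 × E3, f0 z)
    (hd : Integrable (fun z : E3 × E3 =>
      Q (f z) (angmom z) - Q (f0 z) (angmom z) +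
        (((1/2) * ‖z.2‖^2 + W z.1) - E0) * (f z - f0 z))) :
    0 ≤ ∫ z : E3 × E3,
      (Q (f z) (angmom z) - Q (f0 z) (angmom z) +
        (((1/2) * ‖z.2‖^2 + W z.1) - E0) * (f z - f0 z)) := by
  refine integral_nonneg fun z => ?_
  set P := angmom z
  set s := E0 - ((1/2) * ‖z.2‖^2 + W z.1) with hs
  have hE : ((1/2) * ‖z.2‖^2 + W z.1) - E0 = -s := by rw [hs]; ring
  have hf0z : f0 z = phi Qf' s P := hf0def z
  by_cases h : 0 ≤ s
  · -- f0 z ≥ 0 and Qf' (f0 z) P = s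
    obtain ⟨t, ht, hts⟩ := (hbij P).surjOn h
    have hmem : f0 z ∈ Set.Ici (0:ℝ) := by
      rw [hf0z, phi, if_pos h]
      exact Function.invFunOn_mem (f := fun t => Qf' t P) ⟨t, ht, hts⟩
    have heq : Qf' (f0 z) P = s := by
      rw [hf0z, phi, if_pos h]
      exact Function.invFunOn_eq (f := fun t => Qf' t P) ⟨t, ht, hts⟩
    have := tangent_le (hconv P) (hQderiv (f0 z) P hmem) (hnn z) hmem
    rw [heq] at this
    simp only [Pi.zero_apply, hE]
    nlinarith [this]
  · have hf0z0 : f0 z = 0 := by rw [hf0z, phi, if_neg h]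
    have hQ0 : Q (f0 z) P = 0 := by rw [hf0z0]; exact hQzero P
    have h1 : 0 ≤ Q (f z) P := hQnonneg _ _ (hnn z)
    have h2 : 0 < -s := by linarith [not_le.mp h]
    simp only [Pi.zero_apply, hE, hf0z0]
    nlinarith [hnn z, hQzero P, mul_nonneg h2.le (hnn z)]
end
end
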